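/- arXiv:1503.00511 — 2 statements merged into one kernel-verified Lean document; each statement's English description precedes it below -/
import Mathlib

section
/- Let n>2 be an integer and g a nonnegative integer with gcd(n,g)=1. Set s_n = J_1 − J_n + 2·Σ_{i=1}^{n−2} J_i·(2J_n/(J_1 − J_{n+1}))^{n−(i+1)}, and assume s_n ≠ 0. Then the inverse of C_{n,g}(J) equals (1/s_n)·C·Q_gᵀ, where C is the circulant matrix with first row (c_0,…,c_{n−1}) given by c_0 = 1 + 2·Σ_{i=1}^{n−2} J_{n−i}(2J_n)^{i−1}/(J_1 − J_{n+1})^i, c_1 = −1 + 4·Σ_{i=1}^{n−2} J_{n−1−i}(2J_n)^{i−1}/(J_1 − J_{n+1})^i, and c_j = −2^{j−1}J_n^{j−2}/(J_1 − J_{n+1})^{j−1} for 2 ≤ j ≤ n−1. -/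
open Matrix Finset

def gCirc {α : Type*} (n g : ℕ) (a : ℕ → α) : Matrix (Fin n) (Fin n) α :=
  Matrix.of fun i j => a ((j.val + (n - (i.val * g) % n)) % n)

def Qg (n g : ℕ) : Matrix (Fin n) (Fin n) ℝ :=
  gCirc n g (fun m => if m = 0 then (1 : ℝ) else 0)

def circ (n : ℕ) (c : ℕ → ℝ) : Matrix (Fin n) (Fin n) ℝ :=
  gCirc n 1 c

namespace InvGcircAux

lemma mod_helper (n a b : ℕ) (ha : a < n) (hb : b < n) :
    (a + (n - b)) % n = if b ≤ a then a - b else n + a - b := by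
  rcases le_or_gt b a with h | h
  · rw [show a + (n - b) = n + (a - b) by omega, Nat.add_mod_left,
      Nat.mod_eq_of_lt (by omega), if_pos h]
  · rw [Nat.mod_eq_of_lt (by omega), if_neg (by omega)]; omega

lemma subval {n : ℕ} (a b : Fin n) : (a - b).val = (a.val + (n - b.val)) % n := by
  rw [Fin.sub_def]; simp [Nat.add_comm]

def circFin {n : ℕ} (v : Fin n → ℝ) : Matrix (Fin n) (Fin n) ℝ :=
  Matrix.of fun i j => v (j - i)

lemma circ_eq_circFin {n : ℕ} (hn : 0 < n) (c : ℕ → ℝ) :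
    circ n c = circFin (fun m => c m.val) := by
  ext i j
  simp only [circ, gCirc, circFin, Matrix.of_apply]
  rw [subval]
  congr 2
  rw [mul_one, Nat.mod_eq_of_lt i.isLt]

lemma circFin_mul {n : ℕ} [NeZero n] (v w : Fin n → ℝ) :
    circFin v * circFin w = circFin (fun m => ∑ k : Fin n, v k * w (m - k)) := by
  ext i j
  simp only [circFin, Matrix.mul_apply, Matrix.of_apply]
  rw [← Equiv.sum_comp (Equiv.addRight i) (fun k => v (k - i) * w (j - k))]
  apply Finset.sum_congr rfl
  intro k _
  simp only [Equiv.coe_addRight]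
  rw [add_sub_cancel_right, show j - (k + i) = j - i - k by rw [sub_add_eq_sub_sub, sub_right_comm]]

lemma split3 (m : ℕ) (f : ℕ → ℝ) :
    ∑ k ∈ range (m + 2), f k = f 0 + (∑ k ∈ range m, f (k + 1)) + f (m + 1) := by
  rw [Finset.sum_range_succ, Finset.sum_range_succ']; ring

lemma splitFront (m : ℕ) (f : ℕ → ℝ) :
    ∑ k ∈ range (m + 2), f k = f 0 + f 1 + ∑ k ∈ range m, f (k + 2) := by
  rw [Finset.sum_range_succ', Finset.sum_range_succ']; ring

lemma sum_Icc_one (m : ℕ) (f : ℕ → ℝ) :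
    ∑ i ∈ Finset.Icc 1 m, f i = ∑ k ∈ Finset.range m, f (k + 1) := by
  rw [← Finset.Ico_add_one_right_eq_Icc, Finset.sum_Ico_eq_sum_range]
  exact Finset.sum_congr rfl fun k _ => by rw [Nat.add_comm]

lemma Qg_apply {n : ℕ} (hn : 0 < n) (g : ℕ) (i k : Fin n) :
    Qg n g i k = if k.val = (i.val * g) % n then 1 else 0 := by
  have hq : (i.val * g) % n < n := Nat.mod_lt _ hn
  have hk := k.isLt
  have hiff : ((k.val + (n - (i.val * g) % n)) % n = 0) ↔ (k.val = (i.val * g) % n) := by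
    rw [mod_helper n k.val _ hk hq]
    split_ifs with h <;> omega
  simp only [Qg, gCirc, Matrix.of_apply]
  rw [if_congr hiff rfl rfl]

lemma gCirc_eq_Qg_mul {n : ℕ} (hn : 0 < n) (g : ℕ) (a : ℕ → ℝ) :
    gCirc n g a = Qg n g * circ n a := by
  ext i j
  have hq : (i.val * g) % n < n := Nat.mod_lt _ hn
  rw [Matrix.mul_apply]
  have h1 : ∀ k : Fin n, Qg n g i k * circ n a k j
      = if k = ⟨(i.val * g) % n, hq⟩ then circ n a k j else 0 := by
    intro k
    rw [Qg_apply hn]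
    by_cases hkv : k.val = (i.val * g) % n
    · rw [if_pos hkv, if_pos (Fin.ext hkv), one_mul]
    · rw [if_neg hkv, if_neg (fun h => hkv (by rw [h])), zero_mul]
  simp only [h1]
  rw [Finset.sum_ite_eq' Finset.univ (⟨(i.val * g) % n, hq⟩ : Fin n)
    (fun k => circ n a k j), if_pos (Finset.mem_univ _)]
  simp only [circ, gCirc, Matrix.of_apply]
  congr 2
  rw [mul_one, Nat.mod_eq_of_lt hq]

lemma Qg_mul_transpose {n : ℕ} (hn : 0 < n) (g : ℕ) (hgcd : Nat.gcd n g = 1) :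
    Qg n g * (Qg n g)ᵀ = 1 := by
  ext i j
  rw [Matrix.mul_apply]
  simp only [Matrix.transpose_apply]
  have hq : (i.val * g) % n < n := Nat.mod_lt _ hn
  have h1 : ∀ k : Fin n, Qg n g i k * Qg n g j k
      = if k = ⟨(i.val * g) % n, hq⟩ then Qg n g j k else 0 := by
    intro k
    rw [Qg_apply hn]
    by_cases hkv : k.val = (i.val * g) % n
    · rw [if_pos hkv, if_pos (Fin.ext hkv), one_mul]
    · rw [if_neg hkv, if_neg (fun h => hkv (by rw [h])), zero_mul]
  simp only [h1]
  rw [Finset.sum_ite_eq' Finset.univ (⟨(i.val * g) % n, hq⟩ : Fin n)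
    (fun k => Qg n g j k), if_pos (Finset.mem_univ _), Qg_apply hn]
  have hiff : ((i.val * g) % n = (j.val * g) % n) ↔ i = j := by
    constructor
    · intro h
      have h2 : i.val ≡ j.val [MOD n] :=
        Nat.ModEq.cancel_right_of_coprime hgcd h
      have h3 : i.val % n = j.val % n := h2
      rw [Nat.mod_eq_of_lt i.isLt, Nat.mod_eq_of_lt j.isLt] at h3
      exact Fin.ext h3
    · intro h; rw [h]
  rw [Matrix.one_apply]
  split_ifs with h1 h2 h2
  · rfl
  · exact absurd (hiff.mp h1) h2
  · exact absurd (hiff.mpr h2) h1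
  · rfl

end InvGcircAux

open InvGcircAux

/-- The inverse of the g-circulant matrix of Jacobsthal numbers. -/
theorem inv_gCirc_jacobsthal
    (J : ℕ → ℝ) (hJ0 : J 0 = 0) (hJ1 : J 1 = 1)
    (hrec : ∀ m : ℕ, J (m + 2) = J (m + 1) + 2 * J m)
    (n r : ℕ) (hn : 2 < n) (hgcd : Nat.gcd n r = 1)
    (sn : ℝ)
    (hsn : sn = J 1 - J n +
        2 * ∑ i ∈ Finset.Icc 1 (n - 2),
          J i * (2 * J n / (J 1 - J (n + 1))) ^ (n - (i + 1)))
    (hsnne : sn ≠ 0)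
    (c : ℕ → ℝ)
    (hc0 : c 0 = 1 + 2 * ∑ i ∈ Finset.Icc 1 (n - 2),
        J (n - i) * (2 * J n) ^ (i - 1) / (J 1 - J (n + 1)) ^ i)
    (hc1 : c 1 = -1 + 4 * ∑ i ∈ Finset.Icc 1 (n - 2),
        J (n - 1 - i) * (2 * J n) ^ (i - 1) / (J 1 - J (n + 1)) ^ i)
    (hcj : ∀ j : ℕ, 2 ≤ j → j ≤ n - 1 →
        c j = -(2 ^ (j - 1) * J n ^ (j - 2) / (J 1 - J (n + 1)) ^ (j - 1))) :
    (gCirc n r (fun m => J (m + 1)))⁻¹ = (1 / sn) • (circ n c * (Qg n r)ᵀ) := by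
  have hn0 : 0 < n := by omega
  have hNZ : NeZero n := ⟨by omega⟩
  have key : circ n (fun m => J (m + 1)) * circ n c
      = sn • (1 : Matrix (Fin n) (Fin n) ℝ) := by
    -- ===== scalar facts about J =====
    have hJ2 : J 2 = 1 := by have := hrec 0; rw [hJ0, hJ1] at this; linarith
    have hJge : ∀ m : ℕ, 0 ≤ J m ∧ 1 ≤ J (m + 1) := by
      intro m
      induction m with
      | zero => constructor <;> simp [hJ0, hJ1]
      | succ k ih =>
        refine ⟨by linarith [ih.2], ?_⟩
        rw [hrec k]; linarith [ih.1, ih.2]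
    have hJnpos : 1 ≤ J n := by
      have := (hJge (n - 1)).2; rwa [show n - 1 + 1 = n by omega] at this
    have hJnne : J n ≠ 0 := ne_of_gt (by linarith)
    have hr1 : J (n + 1) = J n + 2 * J (n - 1) := by
      have := hrec (n - 1)
      rwa [show n - 1 + 2 = n + 1 by omega, show n - 1 + 1 = n by omega] at this
    have hr2 : J n = J (n - 1) + 2 * J (n - 2) := by
      have := hrec (n - 2)
      rwa [show n - 2 + 2 = n by omega, show n - 2 + 1 = n - 1 by omega] at this
    have hJn1pos : 1 ≤ J (n - 1) := by
      have := (hJge (n - 2)).2; rwa [show n - 2 + 1 = n - 1 by omega] at this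
    rw [hJ1] at hsn hc0 hc1 hcj
    set D := 1 - J (n + 1) with hD
    have hDne : D ≠ 0 := ne_of_lt (show D < 0 by rw [hD]; linarith)
    set t := 2 * J n / D with ht
    have htD : D * t = 2 * J n := by rw [ht]; field_simp
    clear_value D t
    set SA := ∑ k ∈ Finset.range (n - 2), J (n - 1 - k) * t ^ (k + 1) with hSA
    set SB := ∑ k ∈ Finset.range (n - 2), J (n - 2 - k) * t ^ (k + 1) with hSB
    clear_value SA SB
    -- ===== rewriting the hypotheses =====
    have hIcc0 : c 0 = 1 + SA / J n := by
      rw [hc0, sum_Icc_one, hSA]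
      congr 1
      rw [Finset.sum_div, Finset.mul_sum]
      apply Finset.sum_congr rfl
      intro k hk; rw [Finset.mem_range] at hk
      rw [show n - (k + 1) = n - 1 - k by omega, show k + 1 - 1 = k by omega, ht, div_pow]
      field_simp; ring
    have hIcc1 : c 1 = -1 + 2 * SB / J n := by
      rw [hc1, sum_Icc_one, hSB]
      congr 1
      rw [Finset.mul_sum, mul_div_assoc, Finset.sum_div, Finset.mul_sum]
      apply Finset.sum_congr rfl
      intro k hk; rw [Finset.mem_range] at hk
      rw [show n - 1 - (k + 1) = n - 2 - k by omega, show k + 1 - 1 = k by omega, ht, div_pow]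
      field_simp; ring
    have hsn' : sn = 1 - J n + 2 * SB := by
      rw [hsn, hSB, sum_Icc_one]
      congr 1
      conv_rhs => rw [← Finset.sum_range_reflect (fun k => J (n - 2 - k) * t ^ (k + 1)) (n - 2)]
      congr 1
      apply Finset.sum_congr rfl
      intro j hj; rw [Finset.mem_range] at hj
      rw [show n - 2 - (n - 2 - 1 - j) = j + 1 by omega, show (n - 2 - 1 - j) + 1 = n - (j + 1 + 1) by omega]
    have hcj' : ∀ j : ℕ, 2 ≤ j → j ≤ n - 1 → c j = -(t ^ (j - 1) / J n) := by
      intro j h2 h3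
      rw [hcj j h2 h3, show j - 1 = (j - 2) + 1 by omega, ht, div_pow, mul_pow, pow_succ, pow_succ]
      congr 1
      field_simp; ring
    -- ===== primitive sums =====
    set P := ∑ k ∈ Finset.range (n - 3), J (n - 2 - k) * t ^ (k + 1) with hP
    set Q := ∑ k ∈ Finset.range (n - 3), J (n - 3 - k) * t ^ (k + 1) with hQ
    clear_value P Q
    have hSBP : SB = P + t ^ (n - 2) := by
      rw [hSB, hP, show n - 2 = (n - 3) + 1 by omega, Finset.sum_range_succ,
        show (n - 3) + 1 - (n - 3) = 1 by omega, hJ1, one_mul]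
    have hQ1 : ∑ k ∈ Finset.range (n - 2), J (n - 3 - k) * t ^ (k + 1) = Q := by
      rw [hQ, show n - 2 = (n - 3) + 1 by omega, Finset.sum_range_succ,
        show n - 3 - (n - 3) = 0 by omega, hJ0, zero_mul, add_zero]
    have hSAQ : SA = SB + 2 * Q := by
      rw [hSA, hSB, ← hQ1, Finset.mul_sum, ← Finset.sum_add_distrib]
      apply Finset.sum_congr rfl
      intro k hk; rw [Finset.mem_range] at hk
      have hre := hrec (n - 3 - k)
      rw [show n - 3 - k + 2 = n - 1 - k by omega, show n - 3 - k + 1 = n - 2 - k by omega] at hre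
      rw [hre]; ring
    have hG1 : ∑ k ∈ Finset.range (n - 2), J (n - 1 - k) * t ^ k = P + J (n - 1) := by
      rw [hP, show n - 2 = (n - 3) + 1 by omega, Finset.sum_range_succ']
      congr 1
      · apply Finset.sum_congr rfl
        intro k hk; rw [Finset.mem_range] at hk
        congr 2 <;> omega
      · simp
    have hG2 : ∑ k ∈ Finset.range (n - 2), J (n - 2 - k) * t ^ k = Q + J (n - 2) := by
      rw [hQ, show n - 2 = (n - 3) + 1 by omega, Finset.sum_range_succ']
      congr 1
      · apply Finset.sum_congr rfl
        intro k hk; rw [Finset.mem_range] at hk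
        congr 2 <;> omega
      · simp
    have hDSA : D * SA = 2 * J n * (P + J (n - 1)) := by
      rw [← hG1, hSA, Finset.mul_sum, Finset.mul_sum]
      apply Finset.sum_congr rfl
      intro k hk
      rw [pow_succ]
      linear_combination (J (n - 1 - k) * t ^ k) * htD
    have hDSB : D * SB = 2 * J n * (Q + J (n - 2)) := by
      rw [← hG2, hSB, Finset.mul_sum, Finset.mul_sum]
      apply Finset.sum_congr rfl
      intro k hk
      rw [pow_succ]
      linear_combination (J (n - 2 - k) * t ^ k) * htD
    -- ===== the four scalar identities =====
    have hB0 : D * c 0 - 2 * J n * c (n - 1) = sn := by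
      rw [hIcc0, hcj' (n - 1) (by omega) (le_refl _), hsn', hSBP, show n - 1 - 1 = n - 2 by omega]
      field_simp
      linear_combination hDSA + J n * hD - J n * hr1
    have hB1 : D * c 1 - 2 * J n * c 0 = -sn := by
      rw [hIcc0, hIcc1, hsn', hSAQ]
      field_simp
      linear_combination 2 * hDSB + J n * hr1 - 2 * J n * hr2 - J n * hD
    have hB2 : D * c 2 - 2 * J n * c 1 = -2 * sn := by
      rw [hcj' 2 (le_refl _) (by omega), hIcc1, hsn']
      norm_num
      field_simp
      linear_combination (-1 : ℝ) * htD
    have hB3 : ∀ v : ℕ, 3 ≤ v → v ≤ n - 1 → D * c v - 2 * J n * c (v - 1) = 0 := by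
      intro v h3 hvn
      rw [hcj' v (by omega) hvn, hcj' (v - 1) (by omega) (by omega),
        show v - 1 - 1 = v - 2 by omega, show v - 1 = (v - 2) + 1 by omega, pow_succ]
      field_simp
      linear_combination (-t ^ (v - 2)) * htD

    -- ===== Fin-level machinery =====
    set one : Fin n := ⟨1, by omega⟩ with hone
    set two : Fin n := ⟨2, by omega⟩ with htwo
    clear_value one two
    have honeval : one.val = 1 := by rw [hone]
    have htwoval : two.val = 2 := by rw [htwo]
    have hA' : ∀ x : Fin n, J (x.val + 1) - J ((x - one).val + 1) - 2 * J ((x - two).val + 1)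
        = (if x.val = 0 then D else if x.val = 1 then -(2 * J n) else 0) := by
      intro x
      have hx := x.isLt
      have hs1 : (x - one).val = (x.val + (n - 1)) % n := by rw [subval, honeval]
      have hs2 : (x - two).val = (x.val + (n - 2)) % n := by rw [subval, htwoval]
      by_cases h0 : x.val = 0
      · rw [h0] at hs1 hs2
        rw [hs1, hs2, h0,
          show (0 + (n - 1)) % n = n - 1 by rw [Nat.zero_add]; exact Nat.mod_eq_of_lt (by omega),
          show (0 + (n - 2)) % n = n - 2 by rw [Nat.zero_add]; exact Nat.mod_eq_of_lt (by omega),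
          if_pos rfl, show n - 1 + 1 = n by omega, show n - 2 + 1 = n - 1 by omega,
          show (0 : ℕ) + 1 = 1 from rfl, hJ1, hD]
        linarith
      · by_cases h1 : x.val = 1
        · rw [h1] at hs1 hs2
          rw [hs1, hs2, h1,
            show (1 + (n - 1)) % n = 0 by rw [show 1 + (n - 1) = n by omega, Nat.mod_self],
            show (1 + (n - 2)) % n = n - 1 by
              rw [show 1 + (n - 2) = n - 1 by omega]; exact Nat.mod_eq_of_lt (by omega),
            if_neg (by omega), if_pos rfl, show n - 1 + 1 = n by omega,
            show (0 : ℕ) + 1 = 1 from rfl, show (1 : ℕ) + 1 = 2 from rfl, hJ1, hJ2]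
          ring
        · rw [hs1, hs2, mod_helper n x.val 1 hx (by omega), if_pos (by omega),
            mod_helper n x.val 2 hx (by omega), if_pos (by omega),
            if_neg h0, if_neg h1,
            show x.val - 1 + 1 = x.val by omega, show x.val - 2 + 1 = x.val - 1 by omega]
          have hre := hrec (x.val - 1)
          rw [show x.val - 1 + 2 = x.val + 1 by omega, show x.val - 1 + 1 = x.val by omega] at hre
          linarith
    have hB' : ∀ m : Fin n, D * c m.val - 2 * J n * c ((m - one).val)
        = sn * (if m.val = 0 then 1 else if m.val = 1 then -1 else if m.val = 2 then -2 else 0) := by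
      intro m
      have hm := m.isLt
      have hs1 : (m - one).val = (m.val + (n - 1)) % n := by rw [subval, honeval]
      by_cases h0 : m.val = 0
      · rw [hs1, h0,
          show (0 + (n - 1)) % n = n - 1 by rw [Nat.zero_add]; exact Nat.mod_eq_of_lt (by omega),
          if_pos rfl, mul_one]
        exact hB0
      · by_cases h1 : m.val = 1
        · rw [hs1, h1,
            show (1 + (n - 1)) % n = 0 by rw [show 1 + (n - 1) = n by omega, Nat.mod_self],
            if_neg (by omega), if_pos rfl]
          linarith [hB1]
        · by_cases h2 : m.val = 2
          · rw [hs1, h2, mod_helper n 2 1 (by omega) (by omega), if_pos (by omega),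
              if_neg (by omega), if_neg (by omega), if_pos rfl,
              show (2 : ℕ) - 1 = 1 from rfl]
            linarith [hB2]
          · rw [hs1, mod_helper n m.val 1 hm (by omega), if_pos (by omega),
              if_neg h0, if_neg h1, if_neg h2, mul_zero]
            exact hB3 m.val (by omega) (by omega)
    have hreindex : ∀ x : Fin n, (∑ k : Fin n, J (k.val + 1) * c ((x - k).val))
        = ∑ k : Fin n, J ((x - k).val + 1) * c k.val := by
      intro x
      rw [← Equiv.sum_comp (Equiv.subLeft x) (fun k : Fin n => J (k.val + 1) * c ((x - k).val))]
      apply Finset.sum_congr rfl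
      intro k _
      simp only [Equiv.subLeft_apply]
      rw [sub_sub_cancel]
    have hmaster : ∀ m : Fin n, (∑ k : Fin n, J (k.val + 1) * c ((m - k).val))
        = (∑ k : Fin n, J (k.val + 1) * c ((m - one - k).val))
          + 2 * (∑ k : Fin n, J (k.val + 1) * c ((m - two - k).val))
          + sn * (if m.val = 0 then 1 else if m.val = 1 then -1 else if m.val = 2 then -2 else 0) := by
      intro m
      rw [hreindex m, hreindex (m - one), hreindex (m - two), ← hB' m]
      have hcomb : (∑ k : Fin n, J ((m - k).val + 1) * c k.val)
          - (∑ k : Fin n, J ((m - one - k).val + 1) * c k.val)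
          - 2 * (∑ k : Fin n, J ((m - two - k).val + 1) * c k.val)
          = ∑ k : Fin n,
              (if (m - k).val = 0 then D else if (m - k).val = 1 then -(2 * J n) else 0) * c k.val := by
        rw [Finset.mul_sum, ← Finset.sum_sub_distrib, ← Finset.sum_sub_distrib]
        apply Finset.sum_congr rfl
        intro k _
        rw [sub_right_comm m one k, sub_right_comm m two k]
        linear_combination (c k.val) * hA' (m - k)
      have hne : m ≠ m - one := by
        intro h
        have h2 : m - m = m - (m - one) := by rw [← h]
        rw [sub_self, sub_sub_cancel] at h2
        have h3 := congrArg Fin.val h2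
        rw [Fin.val_zero, honeval] at h3
        omega
      have hpair : (∑ k : Fin n,
            (if (m - k).val = 0 then D else if (m - k).val = 1 then -(2 * J n) else 0) * c k.val)
          = D * c m.val - 2 * J n * c ((m - one).val) := by
        have hz : ∀ x ∈ Finset.univ, x ∉ ({m, m - one} : Finset (Fin n)) →
            (if (m - x).val = 0 then D else if (m - x).val = 1 then -(2 * J n) else 0) * c x.val = 0 := by
          intro x _ hx
          rw [Finset.mem_insert, Finset.mem_singleton] at hx
          push_neg at hx
          rw [if_neg, if_neg, zero_mul]
          · intro h
            apply hx.2
            have he : m - x = one := Fin.ext (by rw [honeval]; exact h)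
            have h2 : m - (m - x) = m - one := by rw [he]
            rwa [sub_sub_cancel] at h2
          · intro h
            apply hx.1
            have he : m - x = 0 := Fin.ext (by rw [Fin.val_zero]; exact h)
            exact (sub_eq_zero.mp he).symm
        rw [← Finset.sum_subset (Finset.subset_univ ({m, m - one} : Finset (Fin n))) hz,
          Finset.sum_pair hne, sub_self, sub_sub_cancel, Fin.val_zero, honeval,
          if_pos rfl, if_neg (by omega), if_pos rfl]
        ring
      linarith [hcomb, hpair]

    -- ===== base cases =====
    have hdd0 : (∑ k : Fin n, J (k.val + 1) * c (((0 : Fin n) - k).val)) = sn := by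
      have hstep : ∀ k : Fin n, (((0 : Fin n) - k)).val = (n - k.val) % n := by
        intro k; rw [subval, Fin.val_zero, Nat.zero_add]
      simp only [hstep]
      rw [Fin.sum_univ_eq_sum_range (fun k => J (k + 1) * c ((n - k) % n)) n]
      have hsplit := split3 (n - 2) (fun k => J (k + 1) * c ((n - k) % n))
      rw [show n - 2 + 2 = n by omega, show n - 2 + 1 = n - 1 by omega] at hsplit
      rw [hsplit]
      have hmid : ∑ k ∈ Finset.range (n - 2), J (k + 1 + 1) * c ((n - (k + 1)) % n) = -(SA / J n) := by
        have h1 : ∑ k ∈ Finset.range (n - 2), J (k + 1 + 1) * c ((n - (k + 1)) % n)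
            = ∑ k ∈ Finset.range (n - 2), -(J (k + 2) * t ^ (n - 2 - k) / J n) := by
          apply Finset.sum_congr rfl
          intro k hk; rw [Finset.mem_range] at hk
          rw [show n - (k + 1) = n - 1 - k by omega, Nat.mod_eq_of_lt (by omega),
            hcj' (n - 1 - k) (by omega) (by omega), show n - 1 - k - 1 = n - 2 - k by omega]
          ring
        have hrev : ∑ k ∈ Finset.range (n - 2), J (k + 2) * t ^ (n - 2 - k) = SA := by
          rw [hSA]
          conv_rhs => rw [← Finset.sum_range_reflect (fun k => J (n - 1 - k) * t ^ (k + 1)) (n - 2)]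
          apply Finset.sum_congr rfl
          intro j hj; rw [Finset.mem_range] at hj
          rw [show n - 1 - (n - 2 - 1 - j) = j + 2 by omega, show (n - 2 - 1 - j) + 1 = n - 2 - j by omega]
        rw [h1, Finset.sum_neg_distrib, ← Finset.sum_div, hrev]
      rw [hmid, Nat.sub_zero, Nat.mod_self, show (0 : ℕ) + 1 = 1 from rfl, hJ1, one_mul,
        show n - (n - 1) = 1 by omega,
        Nat.mod_eq_of_lt (show 1 < n by omega), hIcc0, hIcc1, hsn']
      field_simp
      ring
    have hSA2 : SA + 2 * SB = ∑ k ∈ Finset.range (n - 2), J (n - k) * t ^ (k + 1) := by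
      rw [hSA, hSB, Finset.mul_sum, ← Finset.sum_add_distrib]
      apply Finset.sum_congr rfl
      intro k hk; rw [Finset.mem_range] at hk
      have hre := hrec (n - 2 - k)
      rw [show n - 2 - k + 2 = n - k by omega, show n - 2 - k + 1 = n - 1 - k by omega] at hre
      rw [hre]; ring
    have hdd1 : ∀ m : Fin n, m.val = 1 → (∑ k : Fin n, J (k.val + 1) * c ((m - k).val)) = 0 := by
      intro m hm
      have hstep : ∀ k : Fin n, ((m - k)).val = (1 + (n - k.val)) % n := by
        intro k; rw [subval, hm]
      simp only [hstep]
      rw [Fin.sum_univ_eq_sum_range (fun k => J (k + 1) * c ((1 + (n - k)) % n)) n]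
      have hsplit := splitFront (n - 2) (fun k => J (k + 1) * c ((1 + (n - k)) % n))
      rw [show n - 2 + 2 = n by omega] at hsplit
      rw [hsplit]
      have hmid : ∑ k ∈ Finset.range (n - 2), J (k + 2 + 1) * c ((1 + (n - (k + 2))) % n)
          = -((SA + 2 * SB) / J n) := by
        have h1 : ∑ k ∈ Finset.range (n - 2), J (k + 2 + 1) * c ((1 + (n - (k + 2))) % n)
            = ∑ k ∈ Finset.range (n - 2), -(J (k + 3) * t ^ (n - 2 - k) / J n) := by
          apply Finset.sum_congr rfl
          intro k hk; rw [Finset.mem_range] at hk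
          rw [show 1 + (n - (k + 2)) = n - 1 - k by omega, Nat.mod_eq_of_lt (by omega),
            hcj' (n - 1 - k) (by omega) (by omega), show n - 1 - k - 1 = n - 2 - k by omega,
            show k + 2 + 1 = k + 3 from rfl]
          ring
        have hrev : ∑ k ∈ Finset.range (n - 2), J (k + 3) * t ^ (n - 2 - k)
            = ∑ k ∈ Finset.range (n - 2), J (n - k) * t ^ (k + 1) := by
          conv_rhs => rw [← Finset.sum_range_reflect (fun k => J (n - k) * t ^ (k + 1)) (n - 2)]
          apply Finset.sum_congr rfl
          intro j hj; rw [Finset.mem_range] at hj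
          rw [show n - (n - 2 - 1 - j) = j + 3 by omega, show (n - 2 - 1 - j) + 1 = n - 2 - j by omega]
        rw [h1, Finset.sum_neg_distrib, ← Finset.sum_div, hrev, ← hSA2]
      rw [hmid, Nat.sub_zero,
        show (1 + n) % n = 1 by rw [Nat.add_mod_right]; exact Nat.mod_eq_of_lt (by omega),
        show 1 + (n - 1) = n by omega, Nat.mod_self, show (0 : ℕ) + 1 = 1 from rfl,
        show (1 : ℕ) + 1 = 2 from rfl, hJ1, hJ2, one_mul, one_mul, hIcc0, hIcc1]
      field_simp
      ring
    -- ===== induction =====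
    have hfinal : ∀ v : ℕ, ∀ m : Fin n, m.val = v →
        (∑ k : Fin n, J (k.val + 1) * c ((m - k).val)) = (if m = (0 : Fin n) then sn else 0) := by
      intro v
      induction v using Nat.strong_induction_on with
      | _ v ih =>
        intro m hm
        by_cases h0 : v = 0
        · have hm0 : m = 0 := Fin.ext (by rw [hm, h0, Fin.val_zero])
          rw [if_pos hm0, hm0]
          exact hdd0
        · have hmne : m ≠ 0 := fun h => h0 (by rw [← hm, h, Fin.val_zero])
          rw [if_neg hmne]
          by_cases h1 : v = 1
          · exact hdd1 m (by rw [hm, h1])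
          · have h2 : 2 ≤ v := by omega
            have hvlt : v < n := by rw [← hm]; exact m.isLt
            have hm1 : (m - one).val = v - 1 := by
              rw [subval, honeval, hm, mod_helper n v 1 hvlt (by omega), if_pos (by omega)]
            have hm2 : (m - two).val = v - 2 := by
              rw [subval, htwoval, hm, mod_helper n v 2 hvlt (by omega), if_pos (by omega)]
            have hd1 := ih (v - 1) (by omega) (m - one) hm1
            have hd2 := ih (v - 2) (by omega) (m - two) hm2
            have hne1 : m - one ≠ 0 := fun h => by rw [h, Fin.val_zero] at hm1; omega
            rw [if_neg hne1] at hd1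
            rw [hmaster m, hd1, hm]
            by_cases hv2 : v = 2
            · have hmt : m - two = 0 := Fin.ext (by rw [hm2, hv2, Fin.val_zero])
              rw [if_pos hmt] at hd2
              rw [hd2, hv2]
              norm_num
              ring
            · have hne2 : m - two ≠ 0 := fun h => by rw [h, Fin.val_zero] at hm2; omega
              rw [if_neg hne2] at hd2
              rw [hd2, if_neg (by omega : ¬v = 0), if_neg h1, if_neg hv2]
              ring
    -- ===== the key matrix identity =====
    rw [circ_eq_circFin hn0, circ_eq_circFin hn0, circFin_mul]
    ext i j
    simp only [circFin, Matrix.of_apply, Matrix.smul_apply, Matrix.one_apply, smul_eq_mul]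
    rw [hfinal (j - i).val (j - i) rfl]
    by_cases hij : i = j
    · rw [if_pos hij, if_pos (by rw [hij, sub_self]), mul_one]
    · rw [if_neg hij, if_neg (fun hh => hij (sub_eq_zero.mp hh).symm), mul_zero]

  apply Matrix.inv_eq_right_inv
  rw [gCirc_eq_Qg_mul hn0, mul_smul_comm,
    mul_assoc (Qg n r) (circ n (fun m => J (m + 1))) _,
    ← mul_assoc (circ n (fun m => J (m + 1))) (circ n c) ((Qg n r)ᵀ), key,
    smul_mul_assoc, one_mul, mul_smul_comm, Qg_mul_transpose hn0 r hgcd,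
    smul_smul, one_div, inv_mul_cancel₀ hsnne, one_smul]
end

section
/- Let n>2 be an integer and g a nonnegative integer with gcd(n,g)=1. Set A = q(w_n − w_0), B = w_1 − w_{n+1} and z_n = −w_2 w_n/w_1 + w_1 + Σ_{i=1}^{n−2}(−w_2 w_{i+1}/w_1 + w_{i+2})·(A/B)^{n−(i+1)}, and assume w_1 ≠ 0, B ≠ 0 and z_n ≠ 0. Then the inverse of the g-circulant matrix C_{n,g}(W) with first row (w_1,w_2,…,w_n) equals (1/z_n)·C·Q_gᵀ, where C is the circulant matrix with first row (c_0,…,c_{n−1}) given by c_0 = 1 + Σ_{i=1}^{n−2}(w_{n+2−i} − (w_2/w_1)w_{n+1−i})·A^{i−1}/B^i, c_1 = −w_2/w_1 + q·Σ_{i=1}^{n−2}(w_{n+1−i} − w_2 w_{n−i}/w_1)·A^{i−1}/B^i, and c_j = −(w_3 − w_2²/w_1)·A^{j−2}/B^{j−1} for 2 ≤ j ≤ n−1. -/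
open Matrix

noncomputable def eS (w : ℕ → ℝ) : ℕ → ℝ := fun m => w (m + 1) - w 2 / w 1 * w m

noncomputable def dS (w : ℕ → ℝ) (n : ℕ) : ℕ → ℝ := fun m => w (n + m) - w m

lemma eS_rec {p q : ℝ} {w : ℕ → ℝ} (hrec : ∀ m, w (m + 2) = p * w (m + 1) + q * w m)
    (m : ℕ) : eS w (m + 2) = p * eS w (m + 1) + q * eS w m := by
  simp only [eS]
  linear_combination hrec (m + 1) - w 2 / w 1 * hrec m

lemma dS_rec {p q : ℝ} {w : ℕ → ℝ} (hrec : ∀ m, w (m + 2) = p * w (m + 1) + q * w m)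
    (n m : ℕ) : dS w n (m + 2) = p * dS w n (m + 1) + q * dS w n m := by
  simp only [dS]
  have e1 : n + (m + 2) = (n + m) + 2 := by ring
  have e2 : n + (m + 1) = (n + m) + 1 := by ring
  rw [e1, e2]
  linear_combination hrec (n + m) - hrec m

lemma eS_one {w : ℕ → ℝ} (hw1 : w 1 ≠ 0) : eS w 1 = 0 := by
  simp only [eS]
  field_simp
  simp

lemma eS_zero_q {p q : ℝ} {w : ℕ → ℝ} (hrec : ∀ m, w (m + 2) = p * w (m + 1) + q * w m)
    (hw1 : w 1 ≠ 0) : q * eS w 0 = eS w 2 := by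
  have h2 := hrec 0
  have h3 := hrec 1
  norm_num at h2 h3
  simp only [eS]
  norm_num
  field_simp
  linear_combination w 2 * h2 - w 1 * h3

/-- sliding identity: `e_{a+1} w_{b+1} + q e_a w_b = e_2 w_{a+b}`. -/
lemma Hslide {p q : ℝ} {w : ℕ → ℝ} (hrec : ∀ m, w (m + 2) = p * w (m + 1) + q * w m)
    (hw1 : w 1 ≠ 0) : ∀ a b, eS w (a + 1) * w (b + 1) + q * (eS w a * w b)
      = eS w 2 * w (a + b) := by
  intro a
  induction a with
  | zero =>
      intro b
      rw [eS_one hw1]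
      have := eS_zero_q hrec hw1
      simp only [Nat.zero_add]
      linear_combination w b * this
  | succ a ih =>
      intro b
      have h1 : a + 1 + 1 = a + 2 := by ring
      rw [h1, eS_rec hrec a]
      have h2 := ih (b + 1)
      have h3 := hrec b
      have h4 : a + (b + 1) = a + 1 + b := by ring
      have h5 : b + 1 + 1 = b + 2 := by ring
      rw [h4, h5] at h2
      linear_combination h2 - eS w (a + 1) * h3

/-- the key vanishing identity `B e_{t+2} + e_2 d_{t+1} = A e_{t+1}` -/
lemma rId {p q A B : ℝ} {w : ℕ → ℝ} {n : ℕ}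
    (hrec : ∀ m, w (m + 2) = p * w (m + 1) + q * w m) (hw1 : w 1 ≠ 0)
    (hA : A = q * (w n - w 0)) (hB : B = w 1 - w (n + 1)) :
    ∀ t, B * eS w (t + 2) + eS w 2 * dS w n (t + 1) = A * eS w (t + 1) := by
  have key : ∀ t, (B * eS w (t + 2) + eS w 2 * dS w n (t + 1) = A * eS w (t + 1)) ∧
      (B * eS w (t + 3) + eS w 2 * dS w n (t + 2) = A * eS w (t + 2)) := by
    intro t
    induction t with
    | zero =>
        constructor
        · have he1 := eS_one hw1
          simp only [dS]
          norm_num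
          rw [he1]
          linear_combination eS w 2 * hB
        · have h1 := eS_rec hrec 1
          have he1 := eS_one hw1
          have hn := hrec n
          have h0 := hrec 0
          simp only [dS]
          norm_num
          norm_num at h1 hn h0
          rw [h1]
          linear_combination q * B * he1 + eS w 2 * hn - eS w 2 * h0 + p * eS w 2 * hB
            - eS w 2 * hA
    | succ t ih =>
        obtain ⟨ih1, ih2⟩ := ih
        constructor
        · have h : t + 1 + 2 = t + 3 := by ring
          have h' : t + 1 + 1 = t + 2 := by ring
          rw [h, h']
          exact ih2
        · have h1 : t + 1 + 3 = t + 2 + 2 := by ring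
          have h2 : t + 1 + 2 = t + 2 + 1 := by ring
          rw [h1, h2]
          have he := eS_rec hrec (t + 2)
          have hd := dS_rec hrec n (t + 1)
          have he' := eS_rec hrec (t + 1)
          rw [show t + 1 + 2 = t + 2 + 1 from by ring] at hd he'
          rw [show t + 1 + 1 = t + 2 from by ring] at he'
          linear_combination p * ih2 + q * ih1 + B * he + eS w 2 * hd - A * he'
  exact fun t => (key t).1

noncomputable def G (w : ℕ → ℝ) (n : ℕ) (ρ : ℝ) : ℕ → ℝ :=
  fun s => ∑ i ∈ Finset.range s, dS w n (s - i) * ρ ^ i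

lemma G_succ (w : ℕ → ℝ) (n : ℕ) (ρ : ℝ) (s : ℕ) :
    G w n ρ (s + 1) = dS w n (s + 1) + ρ * G w n ρ s := by
  simp only [G]
  rw [Finset.sum_range_succ']
  have : ∀ i ∈ Finset.range s, dS w n (s + 1 - (i + 1)) * ρ ^ (i + 1)
      = ρ * (dS w n (s - i) * ρ ^ i) := by
    intro i _
    rw [show s + 1 - (i + 1) = s - i from by omega, pow_succ]
    ring
  rw [Finset.sum_congr rfl this, ← Finset.mul_sum]
  norm_num
  ring

lemma Vlem {p q A B : ℝ} {w : ℕ → ℝ} {n : ℕ}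
    (hrec : ∀ m, w (m + 2) = p * w (m + 1) + q * w m) (hw1 : w 1 ≠ 0)
    (hA : A = q * (w n - w 0)) (hB : B = w 1 - w (n + 1)) (hBne : B ≠ 0) :
    ∀ t, B * eS w (t + 1) + eS w 2 * G w n (A / B) t = 0 := by
  have hρB : A / B * B = A := div_mul_cancel₀ A hBne
  intro t
  induction t with
  | zero =>
      simp [G, eS_one hw1]
  | succ t ih =>
      rw [G_succ, show t + 1 + 1 = t + 2 from by ring]
      linear_combination rId hrec hw1 hA hB t + (A / B) * ih - eS w (t + 1) * hρB

lemma slide_sum {p q A B : ℝ} {w : ℕ → ℝ} {n : ℕ} (c : ℕ → ℝ)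
    (hrec : ∀ m, w (m + 2) = p * w (m + 1) + q * w m) (hw1 : w 1 ≠ 0) (hBne : B ≠ 0)
    (hn : 2 < n)
    (hc0 : c 0 = 1 + ∑ i ∈ Finset.Icc 1 (n - 2),
        (w (n + 2 - i) - w 2 / w 1 * w (n + 1 - i)) * A ^ (i - 1) / B ^ i)
    (hc1 : c 1 = -(w 2) / w 1 + q * ∑ i ∈ Finset.Icc 1 (n - 2),
        (w (n + 1 - i) - w 2 * w (n - i) / w 1) * A ^ (i - 1) / B ^ i)
    (t : ℕ) :
    c 0 * w (t + 1) + c 1 * w t = eS w t +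
      eS w 2 / B * ∑ i ∈ Finset.Icc 1 (n - 2), w (n + t - i) * (A / B) ^ (i - 1) := by
  have key : ∀ i ∈ Finset.Icc 1 (n - 2),
      ((w (n + 2 - i) - w 2 / w 1 * w (n + 1 - i)) * A ^ (i - 1) / B ^ i) * w (t + 1)
      + (q * ((w (n + 1 - i) - w 2 * w (n - i) / w 1) * A ^ (i - 1) / B ^ i)) * w t
      - eS w 2 / B * (w (n + t - i) * (A / B) ^ (i - 1)) = 0 := by
    intro i hi
    simp only [Finset.mem_Icc] at hi
    have e1 : n + 2 - i = (n - i) + 2 := by omega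
    have e2' : n + 1 - i = (n - i) + 1 := by omega
    have e3 : n + t - i = (n - i) + t := by omega
    rw [e1, e2', e3]
    have hs := Hslide hrec hw1 (n - i) t
    have hBpow : B ^ i = B ^ (i - 1) * B := by
      rw [← pow_succ]; congr 1; omega
    rw [hBpow, div_pow]
    simp only [eS] at hs ⊢
    rw [show n - i + 1 + 1 = n - i + 2 from rfl] at hs
    linear_combination (A ^ (i - 1) / (B ^ (i - 1) * B)) * hs
  have hsum := Finset.sum_eq_zero key
  rw [Finset.sum_sub_distrib, Finset.sum_add_distrib, ← Finset.sum_mul, ← Finset.sum_mul,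
    ← Finset.mul_sum, ← Finset.mul_sum] at hsum
  simp only [eS] at hsum
  rw [hc0, hc1]
  simp only [eS]
  linear_combination hsum

lemma star_zn {A B zn : ℝ} {w : ℕ → ℝ} {n : ℕ} (c : ℕ → ℝ)
    (hn : 2 < n) (hw1 : w 1 ≠ 0) (hBne : B ≠ 0) (hB : B = w 1 - w (n + 1))
    (hzn : zn = -(w 2 * w n) / w 1 + w 1 +
        ∑ i ∈ Finset.Icc 1 (n - 2),
          (-(w 2 * w (i + 1)) / w 1 + w (i + 2)) * (A / B) ^ (n - (i + 1)))
    (hc0 : c 0 = 1 + ∑ i ∈ Finset.Icc 1 (n - 2),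
        (w (n + 2 - i) - w 2 / w 1 * w (n + 1 - i)) * A ^ (i - 1) / B ^ i) :
    zn = B * c 0 + eS w 2 * (A / B) ^ (n - 2) := by
  -- reindex the zn sum with k = n-1-i
  have h1 : ∑ i ∈ Finset.Icc 1 (n - 2),
      (-(w 2 * w (i + 1)) / w 1 + w (i + 2)) * (A / B) ^ (n - (i + 1))
      = ∑ k ∈ Finset.Icc 1 (n - 2), eS w (n - k) * (A / B) ^ k := by
    apply Finset.sum_nbij' (fun i => n - 1 - i) (fun k => n - 1 - k)
    · intro a ha; simp only [Finset.mem_Icc] at *; omega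
    · intro a ha; simp only [Finset.mem_Icc] at *; omega
    · intro a ha; simp only [Finset.mem_Icc] at *; omega
    · intro a ha; simp only [Finset.mem_Icc] at *; omega
    · intro a ha
      simp only [Finset.mem_Icc] at ha
      rw [show n - (n - 1 - a) = a + 1 from by omega, show n - (a + 1) = n - 1 - a from by omega]
      simp only [eS]
      rw [show a + 1 + 1 = a + 2 from rfl]
      ring
  -- massage B * c0
  have h2 : B * c 0 = B + ∑ i ∈ Finset.Icc 1 (n - 2), eS w (n + 1 - i) * (A / B) ^ (i - 1) := by
    rw [hc0, mul_add, mul_one, Finset.mul_sum]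
    congr 1
    apply Finset.sum_congr rfl
    intro i hi
    simp only [Finset.mem_Icc] at hi
    have hBpow : B ^ i = B ^ (i - 1) * B := by rw [← pow_succ]; congr 1; omega
    rw [hBpow, div_pow]
    simp only [eS]
    rw [show n + 1 - i + 1 = n + 2 - i from by omega]
    field_simp
  -- shift the c0 sum
  have h3 : ∑ i ∈ Finset.Icc 1 (n - 2), eS w (n + 1 - i) * (A / B) ^ (i - 1)
      = ∑ j ∈ Finset.Icc 0 (n - 3), eS w (n - j) * (A / B) ^ j := by
    apply Finset.sum_nbij' (fun i => i - 1) (fun j => j + 1)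
    · intro a ha; simp only [Finset.mem_Icc] at *; omega
    · intro a ha; simp only [Finset.mem_Icc] at *; omega
    · intro a ha; simp only [Finset.mem_Icc] at *; omega
    · intro a ha; simp only [Finset.mem_Icc] at *; omega
    · intro a ha
      simp only [Finset.mem_Icc] at ha
      rw [show n + 1 - a = n - (a - 1) from by omega]
  -- peel top of the zn-sum
  have h4 : ∑ k ∈ Finset.Icc 1 (n - 2), eS w (n - k) * (A / B) ^ k
      = ∑ k ∈ Finset.Icc 1 (n - 3), eS w (n - k) * (A / B) ^ k
        + eS w 2 * (A / B) ^ (n - 2) := by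
    rw [show n - 2 = (n - 3) + 1 from by omega, Finset.sum_Icc_succ_top (by omega)]
    rw [show n - ((n - 3) + 1) = 2 from by omega, show (n - 3) + 1 = n - 2 from by omega]
  -- peel bottom of the c0-sum
  have h5 : ∑ j ∈ Finset.Icc 0 (n - 3), eS w (n - j) * (A / B) ^ j
      = eS w n + ∑ j ∈ Finset.Icc 1 (n - 3), eS w (n - j) * (A / B) ^ j := by
    rw [show Finset.Icc 0 (n - 3) = insert 0 (Finset.Icc 1 (n - 3)) from by
      ext x; simp only [Finset.mem_insert, Finset.mem_Icc]; omega]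
    rw [Finset.sum_insert (by simp)]
    norm_num
  rw [hzn, h1, h4, h2, h3, h5]
  simp only [eS]
  rw [show n + 1 = n + 1 from rfl]
  linear_combination -hB

lemma mainT {p q A B : ℝ} {w : ℕ → ℝ} {n : ℕ} (c : ℕ → ℝ)
    (hrec : ∀ m, w (m + 2) = p * w (m + 1) + q * w m) (hw1 : w 1 ≠ 0) (hBne : B ≠ 0)
    (hn : 2 < n)
    (hA : A = q * (w n - w 0)) (hB : B = w 1 - w (n + 1))
    (hc0 : c 0 = 1 + ∑ i ∈ Finset.Icc 1 (n - 2),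
        (w (n + 2 - i) - w 2 / w 1 * w (n + 1 - i)) * A ^ (i - 1) / B ^ i)
    (hc1 : c 1 = -(w 2) / w 1 + q * ∑ i ∈ Finset.Icc 1 (n - 2),
        (w (n + 1 - i) - w 2 * w (n - i) / w 1) * A ^ (i - 1) / B ^ i)
    (hcj : ∀ j : ℕ, 2 ≤ j → j ≤ n - 1 →
        c j = -((w 3 - w 2 ^ 2 / w 1) * A ^ (j - 2) / B ^ (j - 1)))
    (t : ℕ) (ht1 : 1 ≤ t) (htn : t ≤ n - 1) :
    ∑ j ∈ Finset.range (t + 1), c j * w (t + 1 - j)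
      + ∑ j ∈ Finset.Icc (t + 1) (n - 1), c j * w (n + t + 1 - j) = 0 := by
  obtain ⟨s, rfl⟩ : ∃ s, t = s + 1 := ⟨t - 1, by omega⟩
  have hs2 : s + 2 ≤ n - 1 + 1 := by omega
  have E2 : eS w 2 = w 3 - w 2 ^ 2 / w 1 := by
    simp only [eS]
    rw [show (2 : ℕ) + 1 = 3 from rfl]
    ring
  have H1 : ∑ j ∈ Finset.range (s + 1 + 1), c j * w (s + 1 + 1 - j)
      = c 0 * w (s + 2) + c 1 * w (s + 1)
        + (-(eS w 2 / B)) * ∑ i ∈ Finset.range s, w (s - i) * (A / B) ^ i := by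
    rw [Finset.sum_range_succ', Finset.sum_range_succ']
    have hterm : ∀ i ∈ Finset.range s, c (i + 1 + 1) * w (s + 1 + 1 - (i + 1 + 1))
        = -(eS w 2 / B) * (w (s - i) * (A / B) ^ i) := by
      intro i hi
      simp only [Finset.mem_range] at hi
      rw [show i + 1 + 1 = i + 2 from rfl, show s + 1 + 1 - (i + 2) = s - i from by omega]
      rw [hcj (i + 2) (by omega) (by omega)]
      rw [show i + 2 - 2 = i from by omega, show i + 2 - 1 = i + 1 from by omega]
      rw [E2, div_pow, pow_succ]
      ring
    rw [Finset.sum_congr rfl hterm, ← Finset.mul_sum]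
    norm_num
    ring
  have H2 : ∑ j ∈ Finset.Icc (s + 1 + 1) (n - 1), c j * w (n + (s + 1) + 1 - j)
      = -(eS w 2 / B) * ∑ i ∈ Finset.Icc s (n - 3), w (n + s - i) * (A / B) ^ i := by
    rw [Finset.mul_sum]
    apply Finset.sum_nbij' (fun j => j - 2) (fun i => i + 2)
    · intro a ha; simp only [Finset.mem_Icc] at *; omega
    · intro a ha; simp only [Finset.mem_Icc] at *; omega
    · intro a ha; simp only [Finset.mem_Icc] at *; omega
    · intro a ha; simp only [Finset.mem_Icc] at *; omega
    · intro a ha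
      simp only [Finset.mem_Icc] at ha
      rw [hcj a (by omega) (by omega)]
      rw [show a - 2 = a - 2 from rfl, show n + (s + 1) + 1 - a = n + s - (a - 2) from by omega]
      rw [E2, div_pow, show a - 1 = (a - 2) + 1 from by omega, pow_succ]
      ring
  have H3 : c 0 * w (s + 2) + c 1 * w (s + 1) = eS w (s + 1)
      + eS w 2 / B * ∑ i ∈ Finset.Icc 0 (n - 3), w (n + s - i) * (A / B) ^ i := by
    have := slide_sum c hrec hw1 hBne hn hc0 hc1 (s + 1)
    rw [show s + 1 + 1 = s + 2 from rfl] at this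
    rw [this]
    congr 1
    congr 1
    apply Finset.sum_nbij' (fun i => i - 1) (fun i => i + 1)
    · intro a ha; simp only [Finset.mem_Icc] at *; omega
    · intro a ha; simp only [Finset.mem_Icc] at *; omega
    · intro a ha; simp only [Finset.mem_Icc] at *; omega
    · intro a ha; simp only [Finset.mem_Icc] at *; omega
    · intro a ha
      simp only [Finset.mem_Icc] at ha
      rw [show n + (s + 1) - a = n + s - (a - 1) from by omega]
  have H4 : ∑ i ∈ Finset.Icc 0 (n - 3), w (n + s - i) * (A / B) ^ i
      = ∑ i ∈ Finset.range s, w (n + s - i) * (A / B) ^ i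
        + ∑ i ∈ Finset.Icc s (n - 3), w (n + s - i) * (A / B) ^ i := by
    rw [show Finset.Icc 0 (n - 3) = Finset.Ico 0 (n - 2) from by
          ext x; simp only [Finset.mem_Icc, Finset.mem_Ico]; omega,
        show Finset.Icc s (n - 3) = Finset.Ico s (n - 2) from by
          ext x; simp only [Finset.mem_Icc, Finset.mem_Ico]; omega,
        Finset.range_eq_Ico]
    exact (Finset.sum_Ico_consecutive _ (by omega) (by omega)).symm
  have H5 : ∑ i ∈ Finset.range s, w (n + s - i) * (A / B) ^ i
      - ∑ i ∈ Finset.range s, w (s - i) * (A / B) ^ i = G w n (A / B) s := by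
    simp only [G, dS]
    rw [← Finset.sum_sub_distrib]
    apply Finset.sum_congr rfl
    intro i hi
    simp only [Finset.mem_range] at hi
    rw [show n + (s - i) = n + s - i from by omega]
    ring
  have HV : eS w (s + 1) + eS w 2 / B * G w n (A / B) s = 0 := by
    have h := Vlem hrec hw1 hA hB hBne s
    field_simp
    linear_combination h
  rw [H1, H2, H3]
  linear_combination eS w 2 / B * H4 + eS w 2 / B * H5 + HV

lemma main0 {p q A B zn : ℝ} {w : ℕ → ℝ} {n : ℕ} (c : ℕ → ℝ)
    (hrec : ∀ m, w (m + 2) = p * w (m + 1) + q * w m) (hw1 : w 1 ≠ 0) (hBne : B ≠ 0)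
    (hn : 2 < n)
    (hA : A = q * (w n - w 0)) (hB : B = w 1 - w (n + 1))
    (hzn : zn = -(w 2 * w n) / w 1 + w 1 +
        ∑ i ∈ Finset.Icc 1 (n - 2),
          (-(w 2 * w (i + 1)) / w 1 + w (i + 2)) * (A / B) ^ (n - (i + 1)))
    (hc0 : c 0 = 1 + ∑ i ∈ Finset.Icc 1 (n - 2),
        (w (n + 2 - i) - w 2 / w 1 * w (n + 1 - i)) * A ^ (i - 1) / B ^ i)
    (hc1 : c 1 = -(w 2) / w 1 + q * ∑ i ∈ Finset.Icc 1 (n - 2),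
        (w (n + 1 - i) - w 2 * w (n - i) / w 1) * A ^ (i - 1) / B ^ i)
    (hcj : ∀ j : ℕ, 2 ≤ j → j ≤ n - 1 →
        c j = -((w 3 - w 2 ^ 2 / w 1) * A ^ (j - 2) / B ^ (j - 1))) :
    c 0 * w 1 + ∑ j ∈ Finset.Icc 1 (n - 1), c j * w (n + 1 - j) = zn := by
  have E2 : eS w 2 = w 3 - w 2 ^ 2 / w 1 := by
    simp only [eS]
    rw [show (2 : ℕ) + 1 = 3 from rfl]
    ring
  -- peel j = 1
  have Hpeel : ∑ j ∈ Finset.Icc 1 (n - 1), c j * w (n + 1 - j)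
      = c 1 * w n + ∑ j ∈ Finset.Icc 2 (n - 1), c j * w (n + 1 - j) := by
    rw [show Finset.Icc 1 (n - 1) = insert 1 (Finset.Icc 2 (n - 1)) from by
      ext x; simp only [Finset.mem_insert, Finset.mem_Icc]; omega]
    rw [Finset.sum_insert (by simp)]
    rw [show n + 1 - 1 = n from by omega]
  have H2 : ∑ j ∈ Finset.Icc 2 (n - 1), c j * w (n + 1 - j)
      = -(eS w 2 / B) * ∑ i ∈ Finset.Icc 0 (n - 3), w (n - 1 - i) * (A / B) ^ i := by
    rw [Finset.mul_sum]
    apply Finset.sum_nbij' (fun j => j - 2) (fun i => i + 2)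
    · intro a ha; simp only [Finset.mem_Icc] at *; omega
    · intro a ha; simp only [Finset.mem_Icc] at *; omega
    · intro a ha; simp only [Finset.mem_Icc] at *; omega
    · intro a ha; simp only [Finset.mem_Icc] at *; omega
    · intro a ha
      simp only [Finset.mem_Icc] at ha
      rw [hcj a (by omega) (by omega)]
      rw [show n + 1 - a = n - 1 - (a - 2) from by omega]
      rw [E2, div_pow, show a - 1 = (a - 2) + 1 from by omega, pow_succ]
      ring
  -- slide at t = n
  have H3 : c 0 * w (n + 1) + c 1 * w n = eS w n
      + eS w 2 / B * ∑ i ∈ Finset.Icc 0 (n - 3), w (2 * n - 1 - i) * (A / B) ^ i := by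
    have := slide_sum c hrec hw1 hBne hn hc0 hc1 n
    rw [this]
    congr 1
    congr 1
    apply Finset.sum_nbij' (fun i => i - 1) (fun i => i + 1)
    · intro a ha; simp only [Finset.mem_Icc] at *; omega
    · intro a ha; simp only [Finset.mem_Icc] at *; omega
    · intro a ha; simp only [Finset.mem_Icc] at *; omega
    · intro a ha; simp only [Finset.mem_Icc] at *; omega
    · intro a ha
      simp only [Finset.mem_Icc] at ha
      rw [show n + n - a = 2 * n - 1 - (a - 1) from by omega]
  -- the bracket is G (n-1) plus correction
  have H4 : ∑ i ∈ Finset.Icc 0 (n - 3), w (2 * n - 1 - i) * (A / B) ^ i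
      - ∑ i ∈ Finset.Icc 0 (n - 3), w (n - 1 - i) * (A / B) ^ i
      = G w n (A / B) (n - 1) - dS w n 1 * (A / B) ^ (n - 2) := by
    have hGsplit : G w n (A / B) (n - 1)
        = ∑ i ∈ Finset.Icc 0 (n - 3), dS w n (n - 1 - i) * (A / B) ^ i
          + dS w n 1 * (A / B) ^ (n - 2) := by
      simp only [G]
      rw [show n - 1 = (n - 2) + 1 from by omega, Finset.sum_range_succ]
      rw [show (n - 2) + 1 - (n - 2) = 1 from by omega]
      congr 1
      rw [show Finset.Icc 0 (n - 3) = Finset.range (n - 2) from by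
        ext x; simp only [Finset.mem_Icc, Finset.mem_range]; omega]
    rw [hGsplit, ← Finset.sum_sub_distrib]
    have : ∀ i ∈ Finset.Icc 0 (n - 3),
        w (2 * n - 1 - i) * (A / B) ^ i - w (n - 1 - i) * (A / B) ^ i
        = dS w n (n - 1 - i) * (A / B) ^ i := by
      intro i hi
      simp only [Finset.mem_Icc] at hi
      simp only [dS]
      rw [show n + (n - 1 - i) = 2 * n - 1 - i from by omega]
      ring
    rw [Finset.sum_congr rfl this]
    try ring
  have HV : eS w n + eS w 2 / B * G w n (A / B) (n - 1) = 0 := by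
    have h := Vlem hrec hw1 hA hB hBne (n - 1)
    rw [show n - 1 + 1 = n from by omega] at h
    field_simp
    linear_combination h
  have Hstar : zn = B * c 0 + eS w 2 * (A / B) ^ (n - 2) :=
    star_zn c hn hw1 hBne hB hzn hc0
  have HdS1 : dS w n 1 = -B := by
    simp only [dS]
    rw [hB]
    ring
  have Hw1 : c 0 * w 1 = c 0 * B + c 0 * w (n + 1) := by
    rw [hB]; ring
  rw [Hpeel, Hw1, Hstar]
  have hBB : eS w 2 / B * B = eS w 2 := div_mul_cancel₀ _ hBne
  linear_combination H2 + H3 + eS w 2 / B * H4 + HV - eS w 2 / B * (A / B) ^ (n - 2) * HdS1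
    + (A / B) ^ (n - 2) * hBB

lemma convNat {p q A B zn : ℝ} {w : ℕ → ℝ} {n : ℕ} (c : ℕ → ℝ)
    (hrec : ∀ m, w (m + 2) = p * w (m + 1) + q * w m) (hw1 : w 1 ≠ 0) (hBne : B ≠ 0)
    (hn : 2 < n)
    (hA : A = q * (w n - w 0)) (hB : B = w 1 - w (n + 1))
    (hzn : zn = -(w 2 * w n) / w 1 + w 1 +
        ∑ i ∈ Finset.Icc 1 (n - 2),
          (-(w 2 * w (i + 1)) / w 1 + w (i + 2)) * (A / B) ^ (n - (i + 1)))
    (hc0 : c 0 = 1 + ∑ i ∈ Finset.Icc 1 (n - 2),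
        (w (n + 2 - i) - w 2 / w 1 * w (n + 1 - i)) * A ^ (i - 1) / B ^ i)
    (hc1 : c 1 = -(w 2) / w 1 + q * ∑ i ∈ Finset.Icc 1 (n - 2),
        (w (n + 1 - i) - w 2 * w (n - i) / w 1) * A ^ (i - 1) / B ^ i)
    (hcj : ∀ j : ℕ, 2 ≤ j → j ≤ n - 1 →
        c j = -((w 3 - w 2 ^ 2 / w 1) * A ^ (j - 2) / B ^ (j - 1)))
    (t : ℕ) (ht : t < n) :
    ∑ m ∈ Finset.range n, c ((n - m + t) % n) * w (m + 1)
      = if t = 0 then zn else 0 := by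
  have hsum : ∑ m ∈ Finset.range n, c ((n - m + t) % n) * w (m + 1)
      = ∑ j ∈ Finset.range (t + 1), c j * w (t + 1 - j)
        + ∑ j ∈ Finset.Icc (t + 1) (n - 1), c j * w (n + t + 1 - j) := by
    rw [Finset.range_eq_Ico, ← Finset.sum_Ico_consecutive _ (Nat.zero_le (t + 1))
      (by omega : t + 1 ≤ n)]
    congr 1
    · rw [← Finset.range_eq_Ico, ← Finset.sum_range_reflect (fun j => c j * w (t + 1 - j)) (t + 1)]
      apply Finset.sum_congr rfl
      intro m hm
      simp only [Finset.mem_range] at hm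
      have hmod : (n - m + t) % n = t - m := by
        rw [show n - m + t = n + (t - m) from by omega, Nat.add_mod_left,
          Nat.mod_eq_of_lt (by omega)]
      rw [hmod, show t + 1 - 1 - m = t - m from by omega,
        show t + 1 - (t - m) = m + 1 from by omega]
    · apply Finset.sum_nbij' (fun m => n + t - m) (fun j => n + t - j)
      · intro a ha; simp only [Finset.mem_Ico, Finset.mem_Icc] at *; omega
      · intro a ha; simp only [Finset.mem_Ico, Finset.mem_Icc] at *; omega
      · intro a ha; simp only [Finset.mem_Ico, Finset.mem_Icc] at *; omega
      · intro a ha; simp only [Finset.mem_Ico, Finset.mem_Icc] at *; omega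
      · intro a ha
        simp only [Finset.mem_Ico] at ha
        have hmod : (n - a + t) % n = n + t - a := by
          rw [Nat.mod_eq_of_lt (by omega)]
          omega
        rw [hmod, show n + t + 1 - (n + t - a) = a + 1 from by omega]
  rw [hsum]
  rcases Nat.eq_zero_or_pos t with ht0 | ht1
  · subst ht0
    rw [if_pos rfl]
    rw [Finset.sum_range_one]
    rw [show (0:ℕ) + 1 - 0 = 1 from rfl]
    have := main0 c hrec hw1 hBne hn hA hB hzn hc0 hc1 hcj
    rw [show n + 0 + 1 = n + 1 from rfl]
    linear_combination this
  · rw [if_neg (by omega)]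
    exact mainT c hrec hw1 hBne hn hA hB hc0 hc1 hcj t ht1 (by omega)

lemma modaux {n x k : ℕ} (hx : x < n) (hk : k < n) :
    (k + (n - x)) % n = 0 ↔ k = x := by
  constructor
  · intro h
    obtain ⟨c, hc⟩ := Nat.dvd_of_mod_eq_zero h
    rcases c with _ | _ | c
    · omega
    · omega
    · have h2 : n * 2 ≤ n * (c + 1 + 1) := Nat.mul_le_mul_left n (by omega)
      omega
  · intro h
    rw [h, show x + (n - x) = n from by omega, Nat.mod_self]

lemma Qg_apply {n : ℕ} (g : ℕ) (hn : 0 < n) (i k : Fin n) :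
    Qg n g i k = if k.val = (i.val * g) % n then 1 else 0 := by
  have hx : (i.val * g) % n < n := Nat.mod_lt _ hn
  simp only [Qg, gCirc, Matrix.of_apply]
  by_cases h : k.val = (i.val * g) % n
  · rw [if_pos ((modaux hx k.isLt).2 h), if_pos h]
  · rw [if_neg (fun hc => h ((modaux hx k.isLt).1 hc)), if_neg h]

lemma circ_apply {n : ℕ} (u : ℕ → ℝ) (i j : Fin n) :
    circ n u i j = u ((j.val + (n - i.val)) % n) := by
  simp only [circ, gCirc, Matrix.of_apply, mul_one, Nat.mod_eq_of_lt i.isLt]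

lemma circ_eq_circulant {n : ℕ} (u : ℕ → ℝ) :
    circ n u = (Matrix.circulant (fun k : Fin n => u k.val))ᵀ := by
  ext i j
  rw [Matrix.transpose_apply, Matrix.circulant_apply, circ_apply]
  congr 1
  rw [Fin.sub_def]
  simp [Nat.add_comm]

lemma gCirc_decomp {n : ℕ} (g : ℕ) (hn : 0 < n) (a : ℕ → ℝ) :
    gCirc n g a = Qg n g * circ n a := by
  ext i j
  rw [Matrix.mul_apply]
  have hx : (i.val * g) % n < n := Nat.mod_lt _ hn
  rw [Finset.sum_eq_single (⟨(i.val * g) % n, hx⟩ : Fin n)]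
  · rw [Qg_apply g hn, if_pos rfl, one_mul, circ_apply]
    rfl
  · intro k _ hk
    rw [Qg_apply g hn, if_neg (fun hc => hk (Fin.ext hc)), zero_mul]
  · intro h
    exact absurd (Finset.mem_univ _) h

lemma Qg_mul_transpose {n : ℕ} (g : ℕ) (hn : 0 < n) (hgcd : Nat.gcd n g = 1) :
    Qg n g * (Qg n g)ᵀ = 1 := by
  ext i j
  rw [Matrix.mul_apply, Matrix.one_apply]
  have hx : (i.val * g) % n < n := Nat.mod_lt _ hn
  rw [Finset.sum_eq_single (⟨(i.val * g) % n, hx⟩ : Fin n)]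
  · rw [Matrix.transpose_apply, Qg_apply g hn, if_pos rfl, one_mul, Qg_apply g hn]
    by_cases h : i = j
    · subst h; simp
    · rw [if_neg, if_neg h]
      intro hc
      apply h
      have hme : Nat.ModEq n (j.val * g) (i.val * g) := hc.symm
      have hmod := Nat.ModEq.cancel_right_of_coprime hgcd hme
      have : j.val = i.val := by
        have h1 := hmod
        simp only [Nat.ModEq] at h1
        rwa [Nat.mod_eq_of_lt j.isLt, Nat.mod_eq_of_lt i.isLt] at h1
      exact Fin.ext this.symm
  · intro k _ hk
    rw [Matrix.transpose_apply, Qg_apply g hn, if_neg (fun hc => hk (Fin.ext hc)), zero_mul]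
  · intro h
    exact absurd (Finset.mem_univ _) h

/-- The inverse of the g-circulant matrix of Horadam numbers. -/
theorem inv_gCirc_horadamClassic
    (p q : ℝ) (hpq : p ^ 2 + 4 * q > 0)
    (w : ℕ → ℝ) (hrec : ∀ m : ℕ, w (m + 2) = p * w (m + 1) + q * w m)
    (n r : ℕ) (hn : 2 < n) (hgcd : Nat.gcd n r = 1)
    (A B zn : ℝ) (hA : A = q * (w n - w 0)) (hB : B = w 1 - w (n + 1))
    (hzn : zn = -(w 2 * w n) / w 1 + w 1 +
        ∑ i ∈ Finset.Icc 1 (n - 2),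
          (-(w 2 * w (i + 1)) / w 1 + w (i + 2)) * (A / B) ^ (n - (i + 1)))
    (hw1 : w 1 ≠ 0) (hBne : B ≠ 0) (hznne : zn ≠ 0)
    (c : ℕ → ℝ)
    (hc0 : c 0 = 1 + ∑ i ∈ Finset.Icc 1 (n - 2),
        (w (n + 2 - i) - w 2 / w 1 * w (n + 1 - i)) * A ^ (i - 1) / B ^ i)
    (hc1 : c 1 = -(w 2) / w 1 + q * ∑ i ∈ Finset.Icc 1 (n - 2),
        (w (n + 1 - i) - w 2 * w (n - i) / w 1) * A ^ (i - 1) / B ^ i)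
    (hcj : ∀ j : ℕ, 2 ≤ j → j ≤ n - 1 →
        c j = -((w 3 - w 2 ^ 2 / w 1) * A ^ (j - 2) / B ^ (j - 1))) :
    (gCirc n r (fun m => w (m + 1)))⁻¹ = (1 / zn) • (circ n c * (Qg n r)ᵀ) := by
  have hn0 : 0 < n := by omega
  -- the convolution identity, at the level of `Fin n`
  have hconv : ∀ k : Fin n, (∑ m : Fin n, c ((k - m).val) * w (m.val + 1))
      = zn * (if k.val = 0 then 1 else 0) := by
    intro k
    have h := convNat c hrec hw1 hBne hn hA hB hzn hc0 hc1 hcj k.val k.isLt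
    have hconvert : (∑ m : Fin n, c ((k - m).val) * w (m.val + 1))
        = ∑ m ∈ Finset.range n, c ((n - m + k.val) % n) * w (m + 1) := by
      rw [← Fin.sum_univ_eq_sum_range (fun m => c ((n - m + k.val) % n) * w (m + 1)) n]
      apply Finset.sum_congr rfl
      intro m _
      rfl
    rw [hconvert, h]
    by_cases hk : k.val = 0 <;> simp [hk]
  -- product of the two circulants
  have hWC : circ n (fun m => w (m + 1)) * circ n c
      = zn • (1 : Matrix (Fin n) (Fin n) ℝ) := by
    rw [circ_eq_circulant, circ_eq_circulant, ← Matrix.transpose_mul, Fin.circulant_mul]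
    have hv : (Matrix.circulant (fun k : Fin n => c k.val) *ᵥ fun k : Fin n => w (k.val + 1))
        = zn • (fun k : Fin n => if k.val = 0 then (1 : ℝ) else 0) := by
      funext k
      rw [Pi.smul_apply, smul_eq_mul]
      rw [show (Matrix.circulant (fun k : Fin n => c k.val) *ᵥ fun k : Fin n => w (k.val + 1)) k
          = ∑ m : Fin n, c ((k - m).val) * w (m.val + 1) from by
        simp [Matrix.mulVec, dotProduct, Matrix.circulant_apply]]
      exact hconv k
    rw [hv, Matrix.circulant_smul, Fin.circulant_ite, Matrix.transpose_smul,
      Matrix.transpose_one]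
  have hQQt : Qg n r * (Qg n r)ᵀ = 1 := Qg_mul_transpose r hn0 hgcd
  apply Matrix.inv_eq_right_inv
  rw [gCirc_decomp r hn0]
  have hmid : Qg n r * circ n (fun m => w (m + 1)) * (circ n c * (Qg n r)ᵀ)
      = zn • (1 : Matrix (Fin n) (Fin n) ℝ) := by
    rw [← Matrix.mul_assoc, Matrix.mul_assoc (Qg n r), hWC, Matrix.mul_smul, Matrix.mul_one,
      Matrix.smul_mul, hQQt]
  rw [Matrix.mul_smul, hmid, smul_smul, one_div_mul_cancel hznne, one_smul]
end
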